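/- Alternate inductive Schwartz–Zippel: Let P ∈ F[x_1,...,x_m] be a nonzero polynomial of total degree at most d, and let T_1,...,T_m ⊆ F each have size n. Then the number of zeros of P on T_1 × ⋯ × T_m is at most d·n^{m−1}. -/

import Mathlib

open MvPolynomial Classical

theorem sz_aux' {F : Type*} [Field F] (n : ℕ) :
    ∀ (m d : ℕ) (P : MvPolynomial (Fin m) F), P ≠ 0 → P.totalDegree ≤ d →
    ∀ (T : Fin m → Finset F), (∀ i, (T i).card = n) →
    ((Fintype.piFinset T).filter fun a => MvPolynomial.eval a P = 0).card * n ≤ d * n ^ m := by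
  intro m
  induction m with
  | zero =>
    intro d P hP hdeg T hT
    have : ((Fintype.piFinset T).filter fun a => MvPolynomial.eval a P = 0) = ∅ := by
      apply Finset.filter_false_of_mem
      intro a _
      obtain ⟨c, rfl⟩ := MvPolynomial.C_surjective (Fin 0) P
      simp only [eval_C]
      exact fun h => hP (by rw [h, map_zero])
    rw [this]
    simp
  | succ m ih =>
    intro d P hP hdeg T hT
    set Q : Polynomial (MvPolynomial (Fin m) F) := finSuccEquiv F m P with hQ
    have hQ0 : Q ≠ 0 := fun h =>
      hP ((EmbeddingLike.map_eq_zero_iff (f := finSuccEquiv F m)).mp (hQ ▸ h))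
    set k := Q.natDegree with hk
    set Pk : MvPolynomial (Fin m) F := Q.coeff k with hPk
    have hPk0 : Pk ≠ 0 := Polynomial.leadingCoeff_ne_zero.mpr hQ0
    have hkd : k ≤ d := by
      have h1 := natDegree_finSuccEquiv P
      rw [hk, hQ, h1]
      exact le_trans (degreeOf_le_totalDegree P 0) hdeg
    have hPkdeg : Pk.totalDegree ≤ d - k := by
      have h3 := totalDegree_coeff_finSuccEquiv_add_le P k (by rwa [← hQ, ← hPk])
      rw [← hQ, ← hPk] at h3
      omega
    set T' : Fin m → Finset F := fun i => T i.succ with hT'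
    have hT'c : ∀ i, (T' i).card = n := fun i => hT i.succ
    set B := Fintype.piFinset T' with hB
    have hBcard : B.card = n ^ m := by
      rw [hB, Fintype.card_piFinset]
      simp [hT'c]
    set S := ((Fintype.piFinset T).filter fun a => MvPolynomial.eval a P = 0) with hS
    have hmaps : ∀ a ∈ S, Fin.tail a ∈ B := by
      intro a ha
      rw [hS, Finset.mem_filter] at ha
      rw [hB, Fintype.mem_piFinset]
      intro i
      exact Fintype.mem_piFinset.mp ha.1 i.succ
    have hsum : S.card = ∑ b ∈ B, (S.filter fun a => Fin.tail a = b).card :=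
      Finset.card_eq_sum_card_fiberwise hmaps
    have hinj : ∀ b : Fin m → F, Set.InjOn (fun a : Fin (m+1) → F => a 0)
        (S.filter fun a => Fin.tail a = b) := by
      intro b a ha a' ha' h0
      rw [Finset.coe_filter, Set.mem_setOf_eq] at ha ha'
      have h0' : a 0 = a' 0 := h0
      have : Fin.cons (a 0) (Fin.tail a) = Fin.cons (a' 0) (Fin.tail a') := by
        rw [h0', ha.2, ha'.2]
      rwa [Fin.cons_self_tail, Fin.cons_self_tail] at this
    have hfiber : ∀ b ∈ B, (S.filter fun a => Fin.tail a = b).card ≤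
        (if MvPolynomial.eval b Pk = 0 then n else k) := by
      intro b hb
      by_cases hz : MvPolynomial.eval b Pk = 0
      · rw [if_pos hz]
        calc (S.filter fun a => Fin.tail a = b).card
            ≤ (T 0).card := by
              apply Finset.card_le_card_of_injOn (fun a => a 0) _ (hinj b)
              intro a ha
              rw [Finset.mem_coe, Finset.mem_filter, hS, Finset.mem_filter] at ha
              exact Fintype.mem_piFinset.mp ha.1.1 0
          _ = n := hT 0
      · rw [if_neg hz]
        set q : Polynomial F := Q.map (MvPolynomial.eval b) with hq
        have hq0 : q ≠ 0 := fun h => hz (by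
          have h2 := Polynomial.coeff_map (MvPolynomial.eval b) k (p := Q)
          rw [← hq, h] at h2
          simpa [hPk] using h2.symm)
        have heval : ∀ a ∈ S.filter fun a => Fin.tail a = b,
            Polynomial.eval (a 0) q = 0 := by
          intro a ha
          rw [Finset.mem_filter, hS, Finset.mem_filter] at ha
          have h4 := eval_eq_eval_mv_eval' (Fin.tail a) (a 0) P
          rw [Fin.cons_self_tail] at h4
          show Polynomial.eval (a 0) (Q.map (MvPolynomial.eval b)) = 0
          rw [← ha.2, hQ, ← h4]
          exact ha.1.2
        calc (S.filter fun a => Fin.tail a = b).card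
            = ((S.filter fun a => Fin.tail a = b).image fun a => a 0).card :=
              (Finset.card_image_of_injOn (hinj b)).symm
          _ ≤ q.natDegree := by
              apply Polynomial.card_le_degree_of_subset_roots
              intro x hx
              rw [Finset.mem_val, Finset.mem_image] at hx
              obtain ⟨a, ha, rfl⟩ := hx
              rw [Multiset.mem_toFinset.symm, Multiset.mem_toFinset,
                Polynomial.mem_roots hq0]
              exact heval a ha
          _ ≤ k := Polynomial.natDegree_map_le
    set B0 := B.filter fun b => MvPolynomial.eval b Pk = 0 with hB0
    have hB0card : B0.card * n ≤ (d - k) * n ^ m := ih (d - k) Pk hPk0 hPkdeg T' hT'c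
    have hScard : S.card * n ≤ (B0.card * n + B.card * k) * n := by
      apply Nat.mul_le_mul_right
      rw [hsum]
      calc ∑ b ∈ B, (S.filter fun a => Fin.tail a = b).card
          ≤ ∑ b ∈ B, (if MvPolynomial.eval b Pk = 0 then n else k) :=
            Finset.sum_le_sum hfiber
        _ ≤ ∑ b ∈ B, ((if MvPolynomial.eval b Pk = 0 then n else 0) + k) := by
            apply Finset.sum_le_sum
            intro b _
            split <;> omega
        _ = B0.card * n + B.card * k := by
            rw [Finset.sum_add_distrib, ← Finset.sum_filter, Finset.sum_const,
              Finset.sum_const, smul_eq_mul, smul_eq_mul, ← hB0]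
    calc S.card * n ≤ (B0.card * n + B.card * k) * n := hScard
      _ = B0.card * n * n + B.card * k * n := by ring
      _ ≤ (d - k) * n ^ m * n + n ^ m * k * n := by
          apply Nat.add_le_add
          · exact Nat.mul_le_mul_right _ hB0card
          · rw [hBcard]
      _ = ((d - k) + k) * n ^ (m + 1) := by ring
      _ = d * n ^ (m + 1) := by rw [Nat.sub_add_cancel hkd]

/-- Schwartz–Zippel lemma over arbitrary grids: a nonzero `m`-variate polynomial of total
degree at most `d` has at most `d·n^{m−1}` zeros on a product set `T₁ × ⋯ × T_m` with
`|T_i| = n`. -/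
theorem schwartz_zippel {F : Type*} [Field F] {m d n : ℕ}
    (P : MvPolynomial (Fin m) F) (hP : P ≠ 0) (hdeg : P.totalDegree ≤ d)
    (T : Fin m → Finset F) (hT : ∀ i, (T i).card = n) :
    ((Fintype.piFinset T).filter fun a => MvPolynomial.eval a P = 0).card ≤
      d * n ^ (m - 1) := by
  rcases Nat.eq_zero_or_pos n with hn | hn
  · rcases Nat.eq_zero_or_pos m with hm | hm
    · subst hm
      have : ((Fintype.piFinset T).filter fun a => MvPolynomial.eval a P = 0) = ∅ := by
        apply Finset.filter_false_of_mem
        intro a _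
        obtain ⟨c, rfl⟩ := MvPolynomial.C_surjective (Fin 0) P
        simp only [eval_C]
        exact fun h => hP (by rw [h, map_zero])
      rw [this]
      simp
    · have hempty : (Fintype.piFinset T).card = 0 := by
        rw [Fintype.card_piFinset]
        apply Finset.prod_eq_zero (Finset.mem_univ ⟨0, hm⟩)
        rw [hT, hn]
      calc ((Fintype.piFinset T).filter fun a => MvPolynomial.eval a P = 0).card
          ≤ (Fintype.piFinset T).card := Finset.card_filter_le _ _
        _ = 0 := hempty
        _ ≤ d * n ^ (m - 1) := Nat.zero_le _
  · have h := sz_aux' n m d P hP hdeg T hT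
    apply Nat.le_of_mul_le_mul_right _ hn
    calc ((Fintype.piFinset T).filter fun a => MvPolynomial.eval a P = 0).card * n
        ≤ d * n ^ m := h
      _ ≤ d * n ^ (m - 1) * n := by
          rcases Nat.eq_zero_or_pos m with hm | hm
          · subst hm
            simpa using Nat.le_mul_of_pos_right d hn
          · rw [mul_assoc, ← pow_succ, Nat.sub_add_cancel hm]
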